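/- Let A₁, …, Aₙ be commutative rings and let B = A₁ × ⋯ × Aₙ be their finite direct product. Then B is an ISP-ring if and only if each Aᵢ is an ISP-ring. -/

import Mathlib

/-- An ideal is *regular* if it contains a regular element (a non-zero-divisor). -/
def Ideal.IsRegularIdeal {A : Type*} [CommRing A] (I : Ideal A) : Prop :=
  ∃ a ∈ I, a ∈ nonZeroDivisors A

/-- An ideal is *invertible* if it is regular, finitely generated and locally principal. -/
def Ideal.IsInvertibleIdeal {A : Type*} [CommRing A] (J : Ideal A) : Prop :=
  J.IsRegularIdeal ∧ J.FG ∧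
    ∀ M : Ideal A, ∀ hM : M.IsMaximal,
      haveI := hM.isPrime
      (J.map (algebraMap A (Localization.AtPrime M))).IsPrincipal

/-- `I` can be written as an invertible ideal times a nonempty product of
proper radical ideals. -/
def Ideal.HasISPFactorization {A : Type*} [CommRing A] (I : Ideal A) : Prop :=
  ∃ (J : Ideal A) (L : List (Ideal A)), J.IsInvertibleIdeal ∧ L ≠ [] ∧
    (∀ H ∈ L, H ≠ ⊤ ∧ H.IsRadical) ∧ I = J * L.prod

/-- An ISP-ring: every proper regular ideal factors as an invertible ideal times a
nonempty product of proper radical ideals. -/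
def IsISPRing (A : Type*) [CommRing A] : Prop :=
  ∀ I : Ideal A, I ≠ ⊤ → I.IsRegularIdeal → I.HasISPFactorization

/-- A strongly ISP-ring: every proper ideal factors as an invertible ideal times a
nonempty product of proper radical ideals. -/
def IsStronglyISPRing (A : Type*) [CommRing A] : Prop :=
  ∀ I : Ideal A, I ≠ ⊤ → I.HasISPFactorization

/-- An ISP-domain: an integral domain in which every proper nonzero ideal factors as an
invertible ideal times a nonempty product of proper radical ideals. -/
def IsISPDomain (A : Type*) [CommRing A] : Prop :=
  IsDomain A ∧ ∀ I : Ideal A, I ≠ ⊤ → I ≠ ⊥ → I.HasISPFactorization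

namespace ISPAux

/-- Map of a principal ideal is principal. -/
theorem map_isPrincipal {R S : Type*} [CommRing R] [CommRing S] (f : R →+* S) {I : Ideal R}
    (h : I.IsPrincipal) : (I.map f).IsPrincipal := by
  obtain ⟨a, ha⟩ := h
  refine ⟨f a, ?_⟩
  rw [Ideal.submodule_span_eq] at ha ⊢
  rw [ha, Ideal.map_span, Set.image_singleton]

theorem isPrincipal_map_equiv_iff {R S : Type*} [CommRing R] [CommRing S] (e : R ≃+* S)
    (I : Ideal R) : (I.map (e : R →+* S)).IsPrincipal ↔ I.IsPrincipal := by
  constructor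
  · intro h
    have := map_isPrincipal (e.symm : S →+* R) h
    rwa [Ideal.map_map, RingEquiv.symm_comp, Ideal.map_id] at this
  · exact map_isPrincipal _

theorem listProd_le_of_mem {R : Type*} [CommRing R] {L : List (Ideal R)} {H : Ideal R}
    (h : H ∈ L) : L.prod ≤ H := by
  induction L with
  | nil => cases h
  | cons K L ih =>
    rw [List.prod_cons]
    rcases List.mem_cons.1 h with rfl | h
    · exact Ideal.mul_le_left
    · exact le_trans Ideal.mul_le_right (ih h)

theorem top_isInvertibleIdeal {R : Type*} [CommRing R] : (⊤ : Ideal R).IsInvertibleIdeal := by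
  refine ⟨⟨1, trivial, one_mem _⟩, ⟨{1}, by simp⟩, ?_⟩
  intro M hM
  haveI := hM.isPrime
  exact ⟨1, by rw [Ideal.map_top, Ideal.submodule_span_eq, Ideal.span_singleton_one]⟩

variable {n : ℕ} {A : Fin n → Type*} [∀ i, CommRing (A i)]

/-- component of an ideal of the product ring -/
def comp (I : Ideal (∀ i, A i)) (i : Fin n) : Ideal (A i) :=
  I.map (Pi.evalRingHom A i)

/-- ideal of the product ring built from componentwise ideals -/
def pcons (J : ∀ i, Ideal (A i)) : Ideal (∀ i, A i) :=
  ⨅ i, (J i).comap (Pi.evalRingHom A i)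

theorem eval_surjective (i : Fin n) : Function.Surjective (Pi.evalRingHom A i) :=
  fun a => ⟨Pi.single i a, Pi.single_eq_same i a⟩

theorem mem_pcons {J : ∀ i, Ideal (A i)} {x : ∀ i, A i} :
    x ∈ pcons J ↔ ∀ i, x i ∈ J i := by
  simp [pcons, Submodule.mem_iInf, Ideal.mem_comap]

theorem single_mem_pcons {J : ∀ i, Ideal (A i)} {i : Fin n} {a : A i} (ha : a ∈ J i) :
    Pi.single i a ∈ pcons J := by
  rw [mem_pcons]
  intro j
  rcases eq_or_ne j i with rfl | h
  · simpa using ha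
  · simp [Pi.single_eq_of_ne h]

theorem mem_comp {I : Ideal (∀ i, A i)} {i : Fin n} {a : A i} :
    a ∈ comp I i ↔ ∃ x, x ∈ I ∧ x i = a := by
  rw [comp, Ideal.mem_map_iff_of_surjective _ (eval_surjective i)]
  rfl

theorem single_mem_of_mem_comp {I : Ideal (∀ i, A i)} {i : Fin n} {a : A i}
    (h : a ∈ comp I i) : Pi.single i a ∈ I := by
  obtain ⟨x, hx, rfl⟩ := mem_comp.1 h
  have key : Pi.single i (x i) = x * Pi.single i (1 : A i) := by
    funext j
    rcases eq_or_ne j i with rfl | hj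
    · simp
    · simp [Pi.single_eq_of_ne hj]
  rw [key]
  exact I.mul_mem_right _ hx

theorem pcons_comp (I : Ideal (∀ i, A i)) : pcons (comp I) = I := by
  apply le_antisymm
  · intro x hx
    rw [mem_pcons] at hx
    rw [← Finset.univ_sum_single x]
    exact Ideal.sum_mem _ fun i _ => single_mem_of_mem_comp (hx i)
  · intro x hx
    exact mem_pcons.2 fun i => Ideal.mem_map_of_mem _ hx

theorem comp_pcons (J : ∀ i, Ideal (A i)) (i : Fin n) : comp (pcons J) i = J i := by
  apply le_antisymm
  · rw [comp, Ideal.map_le_iff_le_comap]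
    exact iInf_le _ i
  · intro a ha
    exact mem_comp.2 ⟨Pi.single i a, single_mem_pcons ha, Pi.single_eq_same i a⟩

theorem pcons_eq_top_iff {J : ∀ i, Ideal (A i)} : pcons J = ⊤ ↔ ∀ i, J i = ⊤ := by
  simp only [Ideal.eq_top_iff_one]
  exact mem_pcons

theorem comp_mul (I K : Ideal (∀ i, A i)) (i : Fin n) :
    comp (I * K) i = comp I i * comp K i :=
  Ideal.map_mul _ I K

theorem comp_listProd (L : List (Ideal (∀ i, A i))) (i : Fin n) :
    comp L.prod i = (L.map (fun H => comp H i)).prod := by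
  induction L with
  | nil => simp [comp, Ideal.map_top]
  | cons H L ih => simp [comp_mul, ih]

theorem mem_nzd_pi {x : ∀ i, A i} :
    x ∈ nonZeroDivisors (∀ i, A i) ↔ ∀ i, x i ∈ nonZeroDivisors (A i) := by
  constructor
  · intro hx i
    rw [mem_nonZeroDivisors_iff_right]
    intro c hc
    have h1 : Pi.single i c * x = 0 := by
      funext j
      rcases eq_or_ne j i with rfl | hj
      · simpa using hc
      · simp [Pi.single_eq_of_ne hj]
    have h2 := mem_nonZeroDivisors_iff_right.1 hx _ h1
    have h3 := congrFun h2 i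
    simpa using h3
  · intro hx
    rw [mem_nonZeroDivisors_iff_right]
    intro y hy
    funext i
    exact mem_nonZeroDivisors_iff_right.1 (hx i) (y i) (congrFun hy i)

theorem comp_isRadical {I : Ideal (∀ i, A i)} (h : I.IsRadical) (i : Fin n) :
    (comp I i).IsRadical := by
  intro a ha
  obtain ⟨k, hk⟩ := ha
  rcases Nat.eq_zero_or_pos k with rfl | hkpos
  · rw [pow_zero] at hk
    exact (comp I i).eq_top_iff_one.mpr hk ▸ trivial
  · have hs : (Pi.single i a : ∀ j, A j) ^ k = Pi.single i (a ^ k) := by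
      funext j
      rcases eq_or_ne j i with rfl | hj
      · simp
      · simp [Pi.single_eq_of_ne hj, zero_pow (Nat.pos_iff_ne_zero.1 hkpos)]
    have hmem : Pi.single i a ∈ I := h ⟨k, hs ▸ single_mem_of_mem_comp hk⟩
    have := Ideal.mem_map_of_mem (Pi.evalRingHom A i) hmem
    simpa [comp] using this

theorem pcons_isRadical {J : ∀ i, Ideal (A i)} (h : ∀ i, (J i).IsRadical) :
    (pcons J).IsRadical := by
  intro x hx
  obtain ⟨k, hk⟩ := hx
  rw [mem_pcons] at hk ⊢
  exact fun i => h i ⟨k, by simpa using hk i⟩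

theorem pcons_fg {J : ∀ i, Ideal (A i)} (h : ∀ i, (J i).FG) : (pcons J).FG := by
  classical
  choose T hT using h
  refine ⟨Finset.univ.biUnion (fun i => (T i).image (fun t => (Pi.single i t : ∀ j, A j))), ?_⟩
  apply le_antisymm
  · rw [Ideal.span_le]
    intro x hx
    rw [Finset.mem_coe, Finset.mem_biUnion] at hx
    obtain ⟨i, -, hx⟩ := hx
    rw [Finset.mem_image] at hx
    obtain ⟨t, ht, rfl⟩ := hx
    exact single_mem_pcons (by rw [← hT i]; exact Ideal.subset_span ht)
  · intro x hx
    rw [← Finset.univ_sum_single x]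
    apply Ideal.sum_mem
    intro i _
    have hxi : x i ∈ Ideal.span (T i : Set (A i)) := by
      rw [hT i]; exact mem_pcons.1 hx i
    refine Submodule.span_induction (p := fun a _ =>
        (Pi.single i a : ∀ j, A j) ∈ Ideal.span _) ?_ ?_ ?_ ?_ hxi
    · intro t ht
      apply Ideal.subset_span
      exact Finset.mem_coe.2 (Finset.mem_biUnion.2
        ⟨i, Finset.mem_univ i, Finset.mem_image_of_mem _ (Finset.mem_coe.1 ht)⟩)
    · simp
    · intro a b _ _ hpa hpb
      rw [Pi.single_add]
      exact Ideal.add_mem _ hpa hpb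
    · intro c a _ hpa
      have : Pi.single i (c • a) = Pi.single i c * Pi.single i a := by
        rw [smul_eq_mul, Pi.single_mul]
      rw [this]
      exact Ideal.mul_mem_left _ _ hpa

theorem principal_transfer {i : Fin n} (M : Ideal (A i)) [hM : M.IsPrime]
    (J M' : Ideal (∀ j, A j)) [hM' : M'.IsPrime]
    (hMeq : M' = M.comap (Pi.evalRingHom A i)) :
    (J.map (algebraMap _ (Localization.AtPrime M'))).IsPrincipal ↔
      ((comp J i).map (algebraMap (A i) (Localization.AtPrime M))).IsPrincipal := by
  subst hMeq
  letI : Algebra (∀ j, A j) (Localization.AtPrime M) :=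
    ((algebraMap (A i) (Localization.AtPrime M)).comp (Pi.evalRingHom A i)).toAlgebra
  have halg : algebraMap (∀ j, A j) (Localization.AtPrime M) =
      (algebraMap (A i) (Localization.AtPrime M)).comp (Pi.evalRingHom A i) :=
    RingHom.algebraMap_toAlgebra _
  haveI : IsLocalization (M.comap (Pi.evalRingHom A i)).primeCompl
      (Localization.AtPrime M) := by
    refine ⟨fun y => ?_, fun z => ?_, fun {x y} h => ?_⟩
    · rw [halg]
      exact IsLocalization.map_units (M := M.primeCompl) _ ⟨y.1 i, y.2⟩
    · obtain ⟨⟨a, s⟩, h⟩ := IsLocalization.surj (M := M.primeCompl) z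
      refine ⟨⟨Pi.single i a, ⟨Function.update 1 i (s : A i), fun hmem => s.2 ?_⟩⟩, ?_⟩
      · simpa using hmem
      · rw [halg]
        simpa using h
    · rw [halg] at h
      obtain ⟨c, hc⟩ := IsLocalization.exists_of_eq (M := M.primeCompl) (by simpa using h)
      refine ⟨⟨Pi.single i (c : A i), fun hmem => c.2 ?_⟩, ?_⟩
      · simpa using hmem
      · funext j
        rcases eq_or_ne j i with rfl | hj
        · simpa using hc
        · simp [Pi.single_eq_of_ne hj]
  let e : Localization.AtPrime (M.comap (Pi.evalRingHom A i)) ≃+*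
      Localization.AtPrime M :=
    (IsLocalization.algEquiv (M.comap (Pi.evalRingHom A i)).primeCompl
      (Localization.AtPrime (M.comap (Pi.evalRingHom A i)))
      (Localization.AtPrime M)).toRingEquiv
  have hcomp : (e : Localization.AtPrime (M.comap (Pi.evalRingHom A i)) →+*
        Localization.AtPrime M).comp
        (algebraMap _ (Localization.AtPrime (M.comap (Pi.evalRingHom A i))))
      = (algebraMap (A i) (Localization.AtPrime M)).comp (Pi.evalRingHom A i) := by
    refine RingHom.ext fun x => ?_
    have hx := (IsLocalization.algEquiv (M.comap (Pi.evalRingHom A i)).primeCompl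
      (Localization.AtPrime (M.comap (Pi.evalRingHom A i)))
      (Localization.AtPrime M)).commutes x
    rw [halg] at hx
    exact hx
  have h1 : ((comp J i).map (algebraMap (A i) (Localization.AtPrime M)))
      = (J.map (algebraMap _
          (Localization.AtPrime (M.comap (Pi.evalRingHom A i))))).map
        (e : Localization.AtPrime (M.comap (Pi.evalRingHom A i)) →+*
          Localization.AtPrime M) := by
    rw [comp, Ideal.map_map, Ideal.map_map, hcomp]
  rw [h1, isPrincipal_map_equiv_iff]

theorem exists_comap_of_isMaximal (M' : Ideal (∀ i, A i)) (hM' : M'.IsMaximal) :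
    ∃ (i : Fin n) (M : Ideal (A i)), M.IsMaximal ∧ M' = M.comap (Pi.evalRingHom A i) := by
  have hne : M' ≠ ⊤ := hM'.ne_top
  have hex : ∃ i, comp M' i ≠ ⊤ := by
    by_contra hall
    push_neg at hall
    exact hne (by rw [← pcons_comp M']; exact pcons_eq_top_iff.2 hall)
  obtain ⟨i, hi⟩ := hex
  have hle : M' ≤ (comp M' i).comap (Pi.evalRingHom A i) := fun x hx =>
    Ideal.mem_map_of_mem _ hx
  have hne2 : (comp M' i).comap (Pi.evalRingHom A i) ≠ ⊤ := by
    intro h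
    apply hi
    rw [Ideal.eq_top_iff_one] at h ⊢
    exact h
  have heq : M' = (comp M' i).comap (Pi.evalRingHom A i) := hM'.eq_of_le hne2 hle
  refine ⟨i, comp M' i, ⟨⟨hi, ?_⟩⟩, heq⟩
  intro N hN
  by_contra hNtop
  have h2 : N.comap (Pi.evalRingHom A i) ≠ ⊤ := by
    intro h
    apply hNtop
    rw [← Ideal.map_comap_of_surjective _ (eval_surjective i) N, h, Ideal.map_top]
  have h1 : M' ≤ N.comap (Pi.evalRingHom A i) := heq ▸ Ideal.comap_mono hN.le
  have h3 := hM'.eq_of_le h2 h1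
  have h4 : comp M' i = N := by
    rw [comp, h3, Ideal.map_comap_of_surjective _ (eval_surjective i)]
  exact hN.ne h4

theorem comp_invertible {J : Ideal (∀ i, A i)} (h : J.IsInvertibleIdeal) (i : Fin n) :
    (comp J i).IsInvertibleIdeal := by
  obtain ⟨⟨a, haJ, hareg⟩, hfg, hloc⟩ := h
  refine ⟨⟨a i, Ideal.mem_map_of_mem _ haJ, mem_nzd_pi.1 hareg i⟩, hfg.map _, ?_⟩
  intro M hMmax
  haveI := hMmax.isPrime
  have hcm : (M.comap (Pi.evalRingHom A i)).IsMaximal :=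
    Ideal.comap_isMaximal_of_surjective _ (eval_surjective i)
  haveI := hcm.isPrime
  exact (principal_transfer M J _ rfl).1 (hloc _ hcm)

theorem pcons_invertible {J : ∀ i, Ideal (A i)} (h : ∀ i, (J i).IsInvertibleIdeal) :
    (pcons J).IsInvertibleIdeal := by
  refine ⟨?_, pcons_fg (fun i => (h i).2.1), ?_⟩
  · choose a haJ hreg using fun i => (h i).1
    exact ⟨fun i => a i, mem_pcons.2 haJ, mem_nzd_pi.2 hreg⟩
  · intro M' hM'
    haveI := hM'.isPrime
    obtain ⟨i, M, hMmax, hMeq⟩ := exists_comap_of_isMaximal M' hM'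
    haveI := hMmax
    haveI := hMmax.isPrime
    rw [principal_transfer M (pcons J) M' hMeq, comp_pcons]
    exact (h i).2.2 M hMmax

theorem comp_comap_same {i : Fin n} (H : Ideal (A i)) :
    comp (H.comap (Pi.evalRingHom A i)) i = H :=
  Ideal.map_comap_of_surjective _ (eval_surjective i) H

theorem comp_comap_ne {i j : Fin n} (hj : j ≠ i) (H : Ideal (A i)) :
    comp (H.comap (Pi.evalRingHom A i)) j = ⊤ := by
  classical
  rw [Ideal.eq_top_iff_one]
  refine mem_comp.2 ⟨Function.update 1 i 0, ?_, ?_⟩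
  · show (Function.update (1 : ∀ k, A k) i 0) i ∈ H
    simp
  · simp [Function.update_of_ne hj]

theorem prod_map_flatMap {α β M : Type*} [CommMonoid M] (g : β → M) (f : α → List β)
    (l : List α) :
    ((l.flatMap f).map g).prod = (l.map (fun a => ((f a).map g).prod)).prod := by
  induction l with
  | nil => simp
  | cons a l ih => simp [ih, List.prod_append]

end ISPAux

/-- A finite direct product of commutative rings is an ISP-ring if and only if each
factor is an ISP-ring. -/
theorem finite_product_isISPRing_iff {n : ℕ} (A : Fin n → Type*)
    [∀ i, CommRing (A i)] :
    IsISPRing (∀ i, A i) ↔ ∀ i, IsISPRing (A i) := by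
  classical
  constructor
  · intro hB i I hItop hIreg
    have hIt_top : I.comap (Pi.evalRingHom A i) ≠ ⊤ := by
      intro h
      apply hItop
      rw [Ideal.eq_top_iff_one] at h ⊢
      exact h
    have hIt_reg : (I.comap (Pi.evalRingHom A i)).IsRegularIdeal := by
      obtain ⟨a, haI, hareg⟩ := hIreg
      refine ⟨Function.update 1 i a, ?_, ?_⟩
      · show (Function.update (1 : ∀ j, A j) i a) i ∈ I
        simpa using haI
      · rw [ISPAux.mem_nzd_pi]
        intro j
        rcases eq_or_ne j i with rfl | hj
        · simpa using hareg
        · rw [Function.update_of_ne hj]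
          exact one_mem _
    obtain ⟨J, L, hJ, hLne, hLmem, heq⟩ := hB _ hIt_top hIt_reg
    refine ⟨ISPAux.comp J i, L.map (fun H => ISPAux.comp H i),
      ISPAux.comp_invertible hJ i, by simpa using hLne, ?_, ?_⟩
    · intro H' hH'
      rw [List.mem_map] at hH'
      obtain ⟨H, hH, rfl⟩ := hH'
      obtain ⟨hHtop, hHrad⟩ := hLmem H hH
      refine ⟨?_, ISPAux.comp_isRadical hHrad i⟩
      intro htop
      apply hHtop
      rw [← ISPAux.pcons_comp H, ISPAux.pcons_eq_top_iff]
      intro j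
      rcases eq_or_ne j i with rfl | hj
      · exact htop
      · have h1 : ISPAux.comp (I.comap (Pi.evalRingHom A i)) j = ⊤ := by
          rw [Ideal.eq_top_iff_one]
          refine ISPAux.mem_comp.2 ⟨Function.update 1 i 0, ?_, ?_⟩
          · show (Function.update (1 : ∀ k, A k) i 0) i ∈ I
            simp
          · simp [Function.update_of_ne hj]
        have h2 : ISPAux.comp (I.comap (Pi.evalRingHom A i)) j ≤ ISPAux.comp H j := by
          rw [heq, ISPAux.comp_mul]
          refine le_trans Ideal.mul_le_right ?_
          rw [ISPAux.comp_listProd]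
          exact ISPAux.listProd_le_of_mem (List.mem_map_of_mem hH)
        exact top_le_iff.1 (h1 ▸ h2)
    · have hproj := congrArg (fun K => ISPAux.comp K i) heq
      rw [ISPAux.comp_mul, ISPAux.comp_listProd] at hproj
      have hci : ISPAux.comp (I.comap (Pi.evalRingHom A i)) i = I :=
        Ideal.map_comap_of_surjective _ (ISPAux.eval_surjective i) I
      rw [← hci]
      exact hproj
  · intro hA I hItop hIreg
    have hreg : ∀ i, (ISPAux.comp I i).IsRegularIdeal := by
      obtain ⟨a, haI, hareg⟩ := hIreg
      exact fun i => ⟨a i, Ideal.mem_map_of_mem _ haI, ISPAux.mem_nzd_pi.1 hareg i⟩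
    have hchoice : ∀ i, ∃ (J : Ideal (A i)) (L : List (Ideal (A i))),
        J.IsInvertibleIdeal ∧ (∀ H ∈ L, H ≠ ⊤ ∧ H.IsRadical) ∧
        ISPAux.comp I i = J * L.prod ∧ (ISPAux.comp I i ≠ ⊤ → L ≠ []) := by
      intro i
      by_cases h : ISPAux.comp I i = ⊤
      · exact ⟨⊤, [], ISPAux.top_isInvertibleIdeal, by simp, by simp [h],
          fun h' => absurd h h'⟩
      · obtain ⟨J, L, hJ, hLne, hLmem, heq⟩ := hA i _ h (hreg i)
        exact ⟨J, L, hJ, hLmem, heq, fun _ => hLne⟩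
    choose Jc Lc hJc hLc heqc hnec using hchoice
    set f : Fin n → List (Ideal (∀ j, A j)) :=
      fun i => (Lc i).map (fun H => H.comap (Pi.evalRingHom A i)) with hf
    refine ⟨ISPAux.pcons Jc, (List.finRange n).flatMap f,
      ISPAux.pcons_invertible hJc, ?_, ?_, ?_⟩
    · have hex : ∃ j, ISPAux.comp I j ≠ ⊤ := by
        by_contra hall
        push_neg at hall
        exact hItop (by rw [← ISPAux.pcons_comp I]; exact ISPAux.pcons_eq_top_iff.2 hall)
      obtain ⟨j, hj⟩ := hex
      obtain ⟨H, hH⟩ := List.exists_mem_of_ne_nil _ (hnec j hj)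
      refine List.ne_nil_of_mem (a := H.comap (Pi.evalRingHom A j)) ?_
      rw [List.mem_flatMap]
      exact ⟨j, List.mem_finRange j, List.mem_map_of_mem hH⟩
    · intro K hK
      rw [List.mem_flatMap] at hK
      obtain ⟨j, -, hK⟩ := hK
      rw [hf, List.mem_map] at hK
      obtain ⟨H, hH, rfl⟩ := hK
      obtain ⟨hHtop, hHrad⟩ := hLc j H hH
      constructor
      · intro h
        apply hHtop
        rw [Ideal.eq_top_iff_one] at h ⊢
        exact h
      · intro x hx
        obtain ⟨k, hk⟩ := hx
        exact hHrad ⟨k, by simpa using hk⟩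
    · have key : ∀ j, ISPAux.comp (ISPAux.pcons Jc * ((List.finRange n).flatMap f).prod) j
          = ISPAux.comp I j := by
        intro j
        rw [ISPAux.comp_mul, ISPAux.comp_pcons, ISPAux.comp_listProd, heqc j]
        congr 1
        calc ((((List.finRange n).flatMap f)).map (fun H => ISPAux.comp H j)).prod
            = ((List.finRange n).map
                (fun i => ((f i).map (fun H => ISPAux.comp H j)).prod)).prod :=
              ISPAux.prod_map_flatMap _ _ _
          _ = ∏ i : Fin n, ((f i).map (fun H => ISPAux.comp H j)).prod :=
              (Fin.prod_univ_def _).symm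
          _ = ((f j).map (fun H => ISPAux.comp H j)).prod := by
              refine Finset.prod_eq_single j ?_ ?_
              · intro b _ hbj
                rw [hf]
                refine List.prod_eq_one ?_
                intro x hx
                rw [List.map_map, List.mem_map] at hx
                obtain ⟨H, hH, rfl⟩ := hx
                show ISPAux.comp (H.comap (Pi.evalRingHom A b)) j = 1
                rw [Ideal.one_eq_top]
                exact ISPAux.comp_comap_ne (Ne.symm hbj) H
              · intro h
                exact absurd (Finset.mem_univ j) h
          _ = (Lc j).prod := by
              rw [hf, List.map_map]
              have hmc : ∀ H ∈ Lc j,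
                  ((fun H => ISPAux.comp H j) ∘ fun H => H.comap (Pi.evalRingHom A j)) H
                    = id H :=
                fun H _ => ISPAux.comp_comap_same H
              rw [List.map_congr_left hmc, List.map_id]
      have hcomps : ISPAux.comp (ISPAux.pcons Jc * ((List.finRange n).flatMap f).prod)
          = ISPAux.comp I := funext key
      rw [← ISPAux.pcons_comp I, ← hcomps, ISPAux.pcons_comp]
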